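/- Let k be an algebraically closed field of characteristic p > 0. Let u and g be polynomials in one variable over k with natDegree g = (p−1) · natDegree u. Then there exists a polynomial h over k with natDegree h ≤ natDegree u such that for every natural number j divisible by p, the coefficient of X^j in h^p + g·h equals the coefficient of X^j in u^p. -/

import Mathlib

open Finset Polynomial Module

section FixedVector

variable {k : Type*} [Field k] [IsAlgClosed k] (p : ℕ) [Fact p.Prime] [CharP k p]

/-- Every injective Frobenius-semilinear endomorphism of a nontrivial finite-dimensional
vector space over an algebraically closed field has a nonzero fixed vector. -/
theorem aux_fixed_vector {V : Type*} [AddCommGroup V] [Module k V]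
    [FiniteDimensional k V] [Nontrivial V]
    (ψ : V →ₛₗ[frobenius k p] V) (hinj : Function.Injective ψ) :
    ∃ v : V, v ≠ 0 ∧ ψ v = v := by
  classical
  obtain ⟨e, he⟩ := exists_ne (0 : V)
  set w : ℕ → V := fun i => (⇑ψ)^[i] e with hw
  have hwsucc : ∀ i, w (i + 1) = ψ (w i) := fun i => Function.iterate_succ_apply' _ _ _
  have hw0 : w 0 = e := rfl
  have hsnoc : ∀ j : ℕ,
      (fun i : Fin (j + 1) => w ↑i) = Fin.snoc (fun i : Fin j => w ↑i) (w j) := by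
    intro j
    funext i
    refine Fin.lastCases ?_ ?_ i
    · rw [Fin.snoc_last]
      simp
    · intro i
      rw [Fin.snoc_castSucc]
      simp
  have hex : ∃ j, w j ∈ Submodule.span k (Set.range fun i : Fin j => w ↑i) := by
    by_contra hno
    push_neg at hno
    have hind : ∀ j, LinearIndependent k (fun i : Fin j => w ↑i) := by
      intro j
      induction j with
      | zero => exact linearIndependent_empty_type
      | succ j ih =>
        rw [hsnoc j, linearIndependent_fin_snoc]
        exact ⟨ih, hno j⟩
    have hcard := (hind (finrank k V + 1)).fintype_card_le_finrank
    simp only [Fintype.card_fin] at hcard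
    omega
  obtain ⟨m, hPm, hmin⟩ : ∃ m, (w m ∈ Submodule.span k (Set.range fun i : Fin m => w ↑i)) ∧
      ∀ j, j < m → w j ∉ Submodule.span k (Set.range fun i : Fin j => w ↑i) :=
    ⟨Nat.find hex, Nat.find_spec hex, fun j hj => Nat.find_min hex hj⟩
  have hindep : ∀ j, j ≤ m → LinearIndependent k (fun i : Fin j => w ↑i) := by
    intro j
    induction j with
    | zero => intro _; exact linearIndependent_empty_type
    | succ j ih =>
      intro hj
      rw [hsnoc j, linearIndependent_fin_snoc]
      exact ⟨ih (by omega), hmin j (by omega)⟩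
  have hm0 : m ≠ 0 := by
    intro h
    rw [h] at hPm
    have hre : (Set.range fun i : Fin 0 => w ↑i) = ∅ := Set.range_eq_empty _
    rw [hre, Submodule.span_empty, Submodule.mem_bot, hw0] at hPm
    exact he hPm
  obtain ⟨M, rfl⟩ : ∃ M, m = M + 1 := ⟨m - 1, (Nat.succ_pred_eq_of_pos (Nat.pos_of_ne_zero hm0)).symm⟩
  rw [Submodule.mem_span_range_iff_exists_fun] at hPm
  obtain ⟨c, hc⟩ := hPm
  set cc : ℕ → k := fun i => if h : i < M + 1 then c ⟨i, h⟩ else 0 with hccdef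
  have hcc : ∑ i ∈ range (M + 1), cc i • w i = w (M + 1) := by
    rw [← Fin.sum_univ_eq_sum_range (fun i => cc i • w i) (M + 1), ← hc]
    refine Finset.sum_congr rfl fun i _ => ?_
    simp only [hccdef]
    rw [dif_pos i.isLt]
  have hppos : 1 < p := (Fact.out : p.Prime).one_lt
  -- the constant coefficient is nonzero
  have hc0 : cc 0 ≠ 0 := by
    intro h0
    refine hmin M (by omega) ?_
    have h1 : ∑ i ∈ range M, cc (i + 1) • w (i + 1) = w (M + 1) := by
      rw [← hcc, Finset.sum_range_succ', h0, zero_smul, add_zero]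
    have h2 : ψ (∑ i ∈ range M, ((frobeniusEquiv k p).symm (cc (i + 1))) • w i) = w (M + 1) := by
      rw [map_sum, ← h1]
      refine Finset.sum_congr rfl fun i _ => ?_
      rw [LinearMap.map_smulₛₗ, ← hwsucc]
      congr 1
      rw [← coe_frobeniusEquiv]
      exact (frobeniusEquiv k p).apply_symm_apply _
    have h3 : w M = ∑ i ∈ range M, ((frobeniusEquiv k p).symm (cc (i + 1))) • w i := by
      refine hinj ?_
      rw [h2, ← hwsucc]
    rw [h3]
    refine Submodule.sum_mem _ fun i hi => Submodule.smul_mem _ _ (Submodule.subset_span ?_)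
    exact ⟨⟨i, Finset.mem_range.mp hi⟩, rfl⟩
  -- find a nonzero root of the auxiliary polynomial
  set Q : Polynomial k :=
    (∑ i ∈ range (M + 1), C (cc i ^ p ^ (M - i)) * X ^ (p ^ (M - i + 1) - 1)) - 1 with hQdef
  have hDpos : ∀ i, i ≤ M → 2 ≤ p ^ (M - i + 1) := by
    intro i hi
    calc 2 ≤ p := hppos
    _ = p ^ 1 := (pow_one p).symm
    _ ≤ p ^ (M - i + 1) := Nat.pow_le_pow_right (by omega) (by omega)
  have hQtop : Q.coeff (p ^ (M + 1) - 1) = cc 0 ^ p ^ M := by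
    have hne : p ^ (M + 1) - 1 ≠ 0 := by
      have := hDpos 0 (by omega)
      simp only [Nat.sub_zero] at this
      omega
    simp only [hQdef, coeff_sub, finset_sum_coeff, coeff_C_mul, coeff_X_pow, coeff_one,
      if_neg hne, sub_zero]
    rw [Finset.sum_eq_single 0]
    · simp
    · intro i hi hne0
      rw [if_neg, mul_zero]
      intro heq
      have hiM : i < M + 1 := Finset.mem_range.mp hi
      have hlt : p ^ (M - i + 1) < p ^ (M + 1) :=
        Nat.pow_lt_pow_right hppos (by omega)
      have h2 := hDpos i (by omega)
      omega
    · intro h0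
      exact absurd (Finset.mem_range.mpr (by omega)) h0
  have hQD : ((p ^ (M + 1) - 1 : ℕ) : WithBot ℕ) ≤ Q.degree :=
    le_degree_of_ne_zero (by rw [hQtop]; exact pow_ne_zero _ hc0)
  have hQdeg : Q.degree ≠ 0 := by
    intro h
    rw [h] at hQD
    have h2 : p ^ (M + 1) - 1 ≤ 0 := by exact_mod_cast hQD
    have := hDpos 0 (by omega)
    simp only [Nat.sub_zero] at this
    omega
  obtain ⟨t, ht⟩ := IsAlgClosed.exists_root Q hQdeg
  have heval : ∑ i ∈ range (M + 1), cc i ^ p ^ (M - i) * t ^ (p ^ (M - i + 1) - 1) = 1 := by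
    have h1 : Q.eval t = 0 := ht
    simp only [hQdef, eval_sub, eval_one, eval_finset_sum, eval_mul, eval_C, eval_pow,
      eval_X, sub_eq_zero] at h1
    exact h1
  have ht0 : t ≠ 0 := by
    intro h
    subst h
    rw [Finset.sum_eq_zero] at heval
    · exact one_ne_zero heval.symm
    · intro i hi
      have h2 := hDpos i (by have := Finset.mem_range.mp hi; omega)
      rw [zero_pow (by omega), mul_zero]
  have htroot : ∑ i ∈ range (M + 1), cc i ^ p ^ (M - i) * t ^ p ^ (M - i + 1) = t := by
    calc ∑ i ∈ range (M + 1), cc i ^ p ^ (M - i) * t ^ p ^ (M - i + 1)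
        = (∑ i ∈ range (M + 1), cc i ^ p ^ (M - i) * t ^ (p ^ (M - i + 1) - 1)) * t := by
          rw [Finset.sum_mul]
          refine Finset.sum_congr rfl fun i hi => ?_
          have h2 := hDpos i (by have := Finset.mem_range.mp hi; omega)
          rw [mul_assoc, ← pow_succ, Nat.sub_add_cancel (by omega)]
      _ = t := by rw [heval, one_mul]
  -- build the fixed vector
  set lam : ℕ → k := fun i => ∑ j ∈ range (i + 1), cc j ^ p ^ (i - j) * t ^ p ^ (i - j + 1)
    with hlamdef
  have hlam0 : lam 0 = cc 0 * t ^ p := by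
    simp only [hlamdef]
    rw [Finset.sum_range_one]
    norm_num
  have hlamsucc : ∀ i, lam (i + 1) = lam i ^ p + cc (i + 1) * t ^ p := by
    intro i
    simp only [hlamdef]
    rw [Finset.sum_range_succ, Nat.sub_self]
    rw [pow_zero, pow_one, zero_add, pow_one]
    congr 1
    rw [sum_pow_char]
    refine Finset.sum_congr rfl fun j hj => ?_
    have hji : j ≤ i := by have := Finset.mem_range.mp hj; omega
    have h1 : i + 1 - j = (i - j) + 1 := by omega
    rw [h1, mul_pow, ← pow_mul, ← pow_mul, ← pow_succ, ← pow_succ]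
  have hlamtop : lam M = t := htroot
  refine ⟨∑ i ∈ range (M + 1), lam i • w i, ?_, ?_⟩
  · intro hv0
    have hli := hindep (M + 1) le_rfl
    rw [Fintype.linearIndependent_iff] at hli
    have h1 : ∑ i : Fin (M + 1), lam ↑i • w ↑i = 0 := by
      rw [Fin.sum_univ_eq_sum_range (fun i => lam i • w i) (M + 1)]
      exact hv0
    have h2 := hli (fun i => lam ↑i) h1 ⟨0, by omega⟩
    rw [hlam0] at h2
    exact mul_ne_zero hc0 (pow_ne_zero _ ht0) h2
  · rw [map_sum]
    have hterm : ∀ i ∈ range (M + 1), ψ (lam i • w i) = lam i ^ p • w (i + 1) := by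
      intro i _
      rw [LinearMap.map_smulₛₗ, frobenius_def, ← hwsucc]
    rw [Finset.sum_congr rfl hterm]
    calc ∑ i ∈ range (M + 1), lam i ^ p • w (i + 1)
        = ∑ i ∈ range M, lam i ^ p • w (i + 1) + lam M ^ p • w (M + 1) :=
          Finset.sum_range_succ _ _
      _ = ∑ i ∈ range M, lam i ^ p • w (i + 1) + ∑ i ∈ range (M + 1), (t ^ p * cc i) • w i := by
          rw [hlamtop, ← hcc, Finset.smul_sum]
          congr 1
          exact Finset.sum_congr rfl fun i _ => (smul_smul _ _ _)
      _ = ∑ i ∈ range M, lam i ^ p • w (i + 1) +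
            (∑ i ∈ range M, (t ^ p * cc (i + 1)) • w (i + 1) + (t ^ p * cc 0) • w 0) := by
          rw [Finset.sum_range_succ']
      _ = ∑ i ∈ range M, (lam i ^ p + t ^ p * cc (i + 1)) • w (i + 1) + (t ^ p * cc 0) • w 0 := by
          rw [← add_assoc, ← Finset.sum_add_distrib]
          congr 1
          exact Finset.sum_congr rfl fun i _ => (add_smul _ _ _).symm
      _ = ∑ i ∈ range M, lam (i + 1) • w (i + 1) + lam 0 • w 0 := by
          rw [hlam0]
          congr 1
          · refine Finset.sum_congr rfl fun i _ => ?_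
            rw [hlamsucc, mul_comm (cc (i + 1)) (t ^ p)]
          · rw [mul_comm]
      _ = ∑ i ∈ range (M + 1), lam i • w i := by
          rw [Finset.sum_range_succ' (fun i => lam i • w i) M]

end FixedVector

section Surjective

universe v

/-- Over an algebraically closed field of characteristic `p`, the sum of a bijective
Frobenius-semilinear map and a linear map between finite-dimensional spaces of equal
dimension is surjective. -/
theorem aux_surjective {k : Type*} [Field k] [IsAlgClosed k] (p : ℕ) [Fact p.Prime] [CharP k p] :
    ∀ (n : ℕ) (V W : Type v) [AddCommGroup V] [Module k V] [AddCommGroup W] [Module k W],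
      FiniteDimensional k V → FiniteDimensional k W →
      finrank k V = n → finrank k W = n →
      ∀ (φ : V →ₛₗ[frobenius k p] W), Function.Bijective φ →
      ∀ (L : V →ₗ[k] W) (d : W), ∃ x : V, φ x + L x = d := by
  intro n
  induction n with
  | zero =>
    intro V W _ _ _ _ hVfd hWfd hV hW φ hφ L d
    haveI := hWfd
    haveI : Subsingleton W := finrank_zero_iff.mp hW
    exact ⟨0, Subsingleton.elim _ _⟩
  | succ n ih =>
    intro V W _ _ _ _ hVfd hWfd hV hW φ hφ L d
    haveI := hVfd; haveI := hWfd
    haveI : Nontrivial V := Module.nontrivial_of_finrank_pos (R := k) (by omega)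
    have hppos : 1 < p := (Fact.out : p.Prime).one_lt
    -- find a "semilinear eigenvector"
    obtain ⟨v, hv0, lam, hvlam⟩ : ∃ v : V, v ≠ 0 ∧ ∃ lam : k, L v = lam • φ v := by
      by_cases hker : LinearMap.ker L = ⊥
      · have hinjL : Function.Injective L := LinearMap.ker_eq_bot.mp hker
        have hLbij : Function.Bijective L :=
          ⟨hinjL, (LinearMap.injective_iff_surjective_of_finrank_eq_finrank
            (by rw [hV, hW])).mp hinjL⟩
        let e : V ≃ₗ[k] W := LinearEquiv.ofBijective L hLbij
        let ψ : V →ₛₗ[frobenius k p] V := (e.symm.toLinearMap).comp φ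
        have hψinj : Function.Injective ψ := by
          have : ⇑ψ = ⇑e.symm ∘ ⇑φ := rfl
          rw [this]
          exact e.symm.injective.comp hφ.injective
        obtain ⟨v, hv0, hfix⟩ := aux_fixed_vector p ψ hψinj
        refine ⟨v, hv0, 1, ?_⟩
        rw [one_smul]
        have h1 : e.symm (φ v) = v := hfix
        have h2 : φ v = e v := by
          conv_rhs => rw [← h1]
          rw [LinearEquiv.apply_symm_apply]
        rw [h2]
        rfl
      · obtain ⟨v, hvmem, hv0⟩ := Submodule.exists_mem_ne_zero_of_ne_bot hker
        exact ⟨v, hv0, 0, by rw [zero_smul]; exact LinearMap.mem_ker.mp hvmem⟩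
    have hφv0 : φ v ≠ 0 := fun h => hv0 (hφ.injective (by rw [h, map_zero]))
    set Sv : Submodule k V := Submodule.span k {v} with hSv
    set Sw : Submodule k W := Submodule.span k {φ v} with hSw
    have hcomap1 : Sv ≤ Submodule.comap φ Sw := by
      rw [hSv, Submodule.span_le, Set.singleton_subset_iff]
      exact Submodule.mem_span_singleton_self _
    have hcomap2 : Sv ≤ Submodule.comap L Sw := by
      rw [hSv, Submodule.span_le, Set.singleton_subset_iff]
      simp only [SetLike.mem_coe, Submodule.mem_comap]
      rw [hvlam]
      exact Submodule.smul_mem _ _ (Submodule.mem_span_singleton_self _)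
    set φq : (V ⧸ Sv) →ₛₗ[frobenius k p] (W ⧸ Sw) := Submodule.mapQ Sv Sw φ hcomap1 with hφq
    set Lq : (V ⧸ Sv) →ₗ[k] (W ⧸ Sw) := Submodule.mapQ Sv Sw L hcomap2 with hLq
    have hfrv : finrank k (V ⧸ Sv) = n := by
      have h1 := Submodule.finrank_quotient_add_finrank Sv
      rw [finrank_span_singleton hv0] at h1
      omega
    have hfrw : finrank k (W ⧸ Sw) = n := by
      have h1 := Submodule.finrank_quotient_add_finrank Sw
      rw [finrank_span_singleton hφv0] at h1
      omega
    have hφqsurj : Function.Surjective φq := by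
      intro y
      obtain ⟨w, rfl⟩ := Submodule.Quotient.mk_surjective Sw y
      obtain ⟨x, rfl⟩ := hφ.surjective w
      refine ⟨Submodule.Quotient.mk x, ?_⟩
      rw [hφq, Submodule.mapQ_apply]
    have hφqinj : Function.Injective φq := by
      rw [injective_iff_map_eq_zero]
      intro x hx
      obtain ⟨a, rfl⟩ := Submodule.Quotient.mk_surjective Sv x
      rw [Submodule.mapQ_apply, Submodule.Quotient.mk_eq_zero] at hx
      rw [hSw, Submodule.mem_span_singleton] at hx
      obtain ⟨cs, hcs⟩ := hx
      have h1 : φ ((frobeniusEquiv k p).symm cs • v) = φ a := by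
        rw [LinearMap.map_smulₛₗ, ← coe_frobeniusEquiv, RingEquiv.apply_symm_apply]
        exact hcs
      have h2 := hφ.injective h1
      rw [Submodule.Quotient.mk_eq_zero, ← h2, hSv]
      exact Submodule.smul_mem _ _ (Submodule.mem_span_singleton_self _)
    obtain ⟨x0q, hx0q⟩ := ih (V ⧸ Sv) (W ⧸ Sw) inferInstance inferInstance hfrv hfrw
      φq ⟨hφqinj, hφqsurj⟩ Lq (Submodule.Quotient.mk d)
    obtain ⟨x0, rfl⟩ := Submodule.Quotient.mk_surjective Sv x0q
    have hx : φ x0 + L x0 - d ∈ Sw := by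
      rw [← Submodule.Quotient.mk_eq_zero (p := Sw)]
      have h1 : (Submodule.Quotient.mk (φ x0 + L x0 - d) : W ⧸ Sw)
          = φq (Submodule.Quotient.mk x0) + Lq (Submodule.Quotient.mk x0)
            - Submodule.Quotient.mk d := by
        rw [hφq, hLq, Submodule.mapQ_apply, Submodule.mapQ_apply]
        rfl
      rw [h1, hx0q, sub_self]
    rw [hSw, Submodule.mem_span_singleton] at hx
    obtain ⟨c, hc⟩ := hx
    obtain ⟨t, htroot⟩ : ∃ t : k, t ^ p + lam * t + c = 0 := by
      set f : Polynomial k := X ^ p + (C lam * X + C c) with hf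
      have hdegsmall : (C lam * X + C c).degree < (X ^ p : Polynomial k).degree := by
        rw [degree_X_pow]
        refine lt_of_le_of_lt degree_linear_le ?_
        exact_mod_cast hppos
      have hfdeg : f.degree = p := by
        rw [hf, degree_add_eq_left_of_degree_lt hdegsmall, degree_X_pow]
      have hfne : f.degree ≠ 0 := by
        rw [hfdeg]
        intro h
        have : p = 0 := by exact_mod_cast h
        omega
      obtain ⟨t, ht⟩ := IsAlgClosed.exists_root f hfne
      refine ⟨t, ?_⟩
      have h1 : f.eval t = 0 := ht
      simp only [hf, eval_add, eval_pow, eval_X, eval_mul, eval_C] at h1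
      linear_combination h1
    refine ⟨x0 + t • v, ?_⟩
    have h5 : φ x0 + L x0 = d + c • φ v := by
      rw [hc]
      abel
    have h6 : (t ^ p + t * lam + c) • φ v = 0 := by
      rw [show t ^ p + t * lam + c = 0 from by linear_combination htroot, zero_smul]
    calc φ (x0 + t • v) + L (x0 + t • v)
        = (φ x0 + L x0) + ((t ^ p + t * lam + c) • φ v - c • φ v) := by
          rw [map_add, map_add, LinearMap.map_smulₛₗ, map_smul, hvlam, frobenius_def,
            smul_smul, add_smul, add_smul]
          abel
      _ = d := by
          rw [h5, h6]
          abel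

end Surjective

/-- The one-variable case of the paper's Lemma: for polynomials `u, g` over an algebraically
closed field of characteristic `p > 0` with `natDegree g = (p-1) * natDegree u`, there is `h`
with `natDegree h ≤ natDegree u` whose combination `h^p + g*h` has `p`-th power part `u^p`. -/
theorem pth_power_part_prescribed_one_var
    (k : Type*) [Field k] [IsAlgClosed k] (p : ℕ) [CharP k p] (hp : 0 < p)
    (u g : Polynomial k) (hdeg : g.natDegree = (p - 1) * u.natDegree) :
    ∃ h : Polynomial k, h.natDegree ≤ u.natDegree ∧
      ∀ j : ℕ, p ∣ j → (h ^ p + g * h).coeff j = (u ^ p).coeff j := by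
  classical
  haveI : NeZero p := ⟨hp.ne'⟩
  haveI hfact : Fact p.Prime := CharP.char_is_prime_of_pos k p
  have hprime : p.Prime := hfact.out
  set n := u.natDegree with hn
  set N := n + 1 with hN
  set cfun : ℕ → ℕ → k := fun j i => if i ≤ p * j then g.coeff (p * j - i) else 0 with hcfun
  set CM : Matrix (Fin N) (Fin N) k := Matrix.of fun j i => cfun ↑j ↑i with hCM
  set L : (Fin N → k) →ₗ[k] (Fin N → k) := CM.mulVecLin with hL
  set φ : (Fin N → k) →ₛₗ[frobenius k p] (Fin N → k) :=
    { toFun := fun a j => a j ^ p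
      map_add' := fun a b => funext fun j => by
        simp only [Pi.add_apply]
        exact add_pow_char _ _ (p := p)
      map_smul' := fun cs a => funext fun j => by
        simp only [Pi.smul_apply, smul_eq_mul, frobenius_def]
        exact mul_pow _ _ _ } with hφ
  have hφapp : ∀ (a : Fin N → k) (j : Fin N), φ a j = a j ^ p := fun _ _ => rfl
  have hφbij : Function.Bijective φ := by
    constructor
    · intro a b hab
      funext j
      have h1 : a j ^ p = b j ^ p := congrFun hab j
      exact frobenius_inj k p h1
    · intro b
      refine ⟨fun j => (frobeniusEquiv k p).symm (b j), funext fun j => ?_⟩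
      rw [hφapp]
      exact (frobeniusEquiv k p).apply_symm_apply _
  have hfr : finrank k (Fin N → k) = N := by
    rw [Module.finrank_pi, Fintype.card_fin]
  obtain ⟨a, ha⟩ := aux_surjective p N (Fin N → k) (Fin N → k) inferInstance inferInstance
    hfr hfr φ hφbij L (fun j => u.coeff ↑j ^ p)
  set a' : ℕ → k := fun i => if h : i < N then a ⟨i, h⟩ else 0 with ha'
  have ha'lt : ∀ (i : ℕ) (hi : i < N), a' i = a ⟨i, hi⟩ := fun i hi => dif_pos hi
  have ha'ge : ∀ i : ℕ, N ≤ i → a' i = 0 := fun i hi => dif_neg (by omega)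
  have hcle : ∀ j i : ℕ, i ≤ p * j → cfun j i = g.coeff (p * j - i) := fun j i hi => if_pos hi
  have hcgt : ∀ j i : ℕ, p * j < i → cfun j i = 0 := fun j i hi => if_neg (by omega)
  set h : Polynomial k := ∑ i ∈ range N, C (a' i) * X ^ i with hh
  have hcoeff : ∀ j, h.coeff j = a' j := by
    intro j
    rw [hh, finset_sum_coeff]
    simp only [coeff_C_mul, coeff_X_pow]
    have h1 : ∀ i ∈ range N, a' i * (if j = i then (1 : k) else 0)
        = if j = i then a' i else 0 := by
      intro i _
      split <;> simp
    rw [Finset.sum_congr rfl h1, Finset.sum_ite_eq]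
    by_cases hj : j ∈ range N
    · rw [if_pos hj]
    · rw [if_neg hj, ha'ge j (by simpa using hj)]
  have hdegh : h.natDegree ≤ n := by
    refine natDegree_le_iff_coeff_eq_zero.mpr fun m hm => ?_
    rw [hcoeff]
    exact ha'ge m (by omega)
  have key : ∀ m : ℕ, ∀ hm : m < N,
      a' m ^ p + ∑ i ∈ range N, cfun m i * a' i = u.coeff m ^ p := by
    intro m hm
    have h1 := congrFun ha ⟨m, hm⟩
    simp only [Pi.add_apply] at h1
    have h2 : φ a ⟨m, hm⟩ = a' m ^ p := by
      rw [hφapp, ha'lt m hm]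
    have h3 : L a ⟨m, hm⟩ = ∑ i ∈ range N, cfun m i * a' i := by
      rw [hL, Matrix.mulVecLin_apply]
      have h4 : CM.mulVec a ⟨m, hm⟩ = ∑ i : Fin N, cfun m ↑i * a' ↑i := by
        simp only [Matrix.mulVec, dotProduct, hCM, Matrix.of_apply]
        refine Finset.sum_congr rfl fun i _ => ?_
        rw [ha'lt ↑i i.isLt]
      rw [h4, Fin.sum_univ_eq_sum_range (fun i => cfun m i * a' i) N]
    rw [← h2, ← h3, h1]
  refine ⟨h, hdegh, ?_⟩
  intro j hdvd
  obtain ⟨m, rfl⟩ := hdvd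
  have hhp : (h ^ p).coeff (p * m) = a' m ^ p := by
    rw [← Polynomial.map_frobenius_expand, coeff_map, Polynomial.coeff_expand hp,
      if_pos (dvd_mul_right p m), Nat.mul_div_cancel_left m hp, frobenius_def, hcoeff]
  have hup : (u ^ p).coeff (p * m) = u.coeff m ^ p := by
    rw [← Polynomial.map_frobenius_expand, coeff_map, Polynomial.coeff_expand hp,
      if_pos (dvd_mul_right p m), Nat.mul_div_cancel_left m hp, frobenius_def]
  rw [coeff_add, hhp, hup]
  by_cases hm : m < N
  · have hgh : (g * h).coeff (p * m) = ∑ i ∈ range N, cfun m i * a' i := by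
      rw [mul_comm g h, coeff_mul, Finset.Nat.sum_antidiagonal_eq_sum_range_succ_mk]
      have e1 : ∑ i ∈ range (p * m + 1), h.coeff i * g.coeff (p * m - i)
          = ∑ i ∈ range (p * m + 1), cfun m i * a' i := by
        refine Finset.sum_congr rfl fun i hi => ?_
        have hile : i ≤ p * m := by have := Finset.mem_range.mp hi; omega
        rw [hcoeff, hcle m i hile, mul_comm]
      have e2 : ∑ i ∈ range (p * m + 1), cfun m i * a' i
          = ∑ i ∈ range (p * m + N + 1), cfun m i * a' i := by
        refine Finset.sum_subset (Finset.range_subset_range.mpr (by omega)) ?_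
        intro i _ hi
        have hgt : p * m < i := by
          have := Finset.mem_range.not.mp hi
          omega
        rw [hcgt m i (by omega), zero_mul]
      have e3 : ∑ i ∈ range N, cfun m i * a' i
          = ∑ i ∈ range (p * m + N + 1), cfun m i * a' i := by
        refine Finset.sum_subset (Finset.range_subset_range.mpr (by omega)) ?_
        intro i _ hi
        have hgt : N ≤ i := by
          have := Finset.mem_range.not.mp hi
          omega
        rw [ha'ge i (by omega), mul_zero]
      rw [e1, e2, ← e3]
    rw [hgh]
    exact key m hm
  · have h1 : a' m = 0 := ha'ge m (by omega)
    have h2 : u.coeff m = 0 := coeff_eq_zero_of_natDegree_lt (by omega)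
    have h3 : (g * h).coeff (p * m) = 0 := by
      refine coeff_eq_zero_of_natDegree_lt ?_
      calc (g * h).natDegree ≤ g.natDegree + h.natDegree := natDegree_mul_le
        _ ≤ (p - 1) * n + n := by
            rw [hdeg]
            exact Nat.add_le_add_left hdegh _
        _ = p * n := by
            have hpe : p - 1 + 1 = p := Nat.succ_pred_eq_of_pos hp
            calc (p - 1) * n + n = ((p - 1) + 1) * n := by rw [add_mul, one_mul]
              _ = p * n := by rw [hpe]
        _ < p * m := by
            have hnm : n < m := by omega
            exact (mul_lt_mul_iff_right₀ hp).mpr hnm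
    rw [h1, h2, h3, add_zero]
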